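/- Let Ω be a convex domain in ℝ^N with Ω ≠ ℝ^N, let I be an interval in ℝ with nonempty interior, and let F be admissible on I. Then F-concavity is nontrivial in Ω; that is, there exists a nonconstant F-concave function in Ω. -/

import Mathlib

open Set

/-- `f : Ω → ℝ` (with values in the domain of `F`) is `F`-concave in `Ω`, where
`F : ℝ → EReal` plays the role of an admissible function `F : I → ℝ ∪ {-∞}`. -/
def FConcaveOn {N : ℕ} (Ω : Set (EuclideanSpace ℝ (Fin N))) (F : ℝ → EReal)
    (f : EuclideanSpace ℝ (Fin N) → ℝ) : Prop :=
  ∀ x ∈ Ω, ∀ y ∈ Ω, ∀ μ ∈ Set.Icc (0 : ℝ) 1,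
    ((1 - μ : ℝ) : EReal) * F (f x) + ((μ : ℝ) : EReal) * F (f y)
      ≤ F (f ((1 - μ) • x + μ • y))

/-- If `Ω ⊊ ℝ^N` is a convex domain and `F` is admissible on an interval `I` with nonempty
interior, then `F`-concavity is nontrivial in `Ω`: there is a nonconstant `F`-concave function. -/
theorem stmt_0 {N : ℕ} (Ω : Set (EuclideanSpace ℝ (Fin N)))
    (hΩopen : IsOpen Ω) (hΩconv : Convex ℝ Ω) (hΩne : Ω.Nonempty) (hΩproper : Ω ≠ univ)
    (I : Set ℝ) (hIconn : I.OrdConnected) (hIint : (interior I).Nonempty)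
    (F : ℝ → EReal) (hFcont : ContinuousOn F (interior I)) (hFmono : StrictMonoOn F I) :
    ∃ f : EuclideanSpace ℝ (Fin N) → ℝ,
      (∀ x ∈ Ω, f x ∈ I) ∧ FConcaveOn Ω F f ∧ ∃ x ∈ Ω, ∃ y ∈ Ω, f x ≠ f y := by
  classical
  -- pick a point outside Ω and separate
  obtain ⟨b, hb⟩ : ∃ b, b ∉ Ω := by
    by_contra h; push_neg at h; exact hΩproper (eq_univ_of_forall h)
  obtain ⟨φ, hφ⟩ := geometric_hahn_banach_open_point hΩconv hΩopen hb
  set L : EuclideanSpace ℝ (Fin N) → ℝ := fun x => φ b - φ x with hLdef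
  have hLpos : ∀ x ∈ Ω, 0 < L x := fun x hx => sub_pos.2 (hφ x hx)
  obtain ⟨x₀, hx₀⟩ := hΩne
  set c := L x₀ with hcdef
  have hc : 0 < c := hLpos x₀ hx₀
  -- a second point in Ω with smaller L
  obtain ⟨ρ, hρ, hball⟩ := Metric.isOpen_iff.1 hΩopen x₀ hx₀
  set v := b - x₀ with hvdef
  have hvb : 0 < φ v := by
    have := hφ x₀ hx₀
    simp only [hvdef, map_sub]; linarith
  have hvnorm : 0 < ‖v‖ := by
    rcases eq_or_ne v 0 with h | h
    · rw [h] at hvb; simp at hvb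
    · exact norm_pos_iff.2 h
  set δ := ρ / (2 * ‖v‖) with hδdef
  have hδpos : 0 < δ := div_pos hρ (by positivity)
  set x₁ := x₀ + δ • v with hx₁def
  have hx₁ : x₁ ∈ Ω := by
    apply hball
    have h1 : dist x₁ x₀ = δ * ‖v‖ := by
      simp [hx₁def, dist_eq_norm, norm_smul, abs_of_pos hδpos]
    have h2 : δ * ‖v‖ = ρ / 2 := by
      rw [hδdef]; field_simp
    rw [Metric.mem_ball, h1, h2]; linarith
  have hLx₁ : L x₁ < c := by
    have hφx₁ : φ x₁ = φ x₀ + δ * φ v := by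
      simp [hx₁def, map_add, map_smul]
    simp only [hLdef, hcdef, hφx₁]
    nlinarith
  -- interval setup
  obtain ⟨t, ht⟩ := hIint
  obtain ⟨r, hr, hballI⟩ := Metric.isOpen_iff.1 isOpen_interior t ht
  have hIoo : Ioo (t - r) (t + r) ⊆ interior I := by
    rw [← Real.ball_eq_Ioo]; exact hballI
  set t₀ := t - r/2 with ht₀def
  set t₁ := t + r/2 with ht₁def
  have ht₀₁ : t₀ < t₁ := by rw [ht₀def, ht₁def]; linarith
  have hsub : Icc t₀ t₁ ⊆ interior I := fun s hs =>
    hIoo ⟨by rw [ht₀def] at hs; linarith [hs.1], by rw [ht₁def] at hs; linarith [hs.2]⟩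
  have hsubI : Icc t₀ t₁ ⊆ I := fun s hs => interior_subset (hsub hs)
  have hu₀ : t - (3/4)*r ∈ I := interior_subset (hIoo ⟨by linarith, by linarith⟩)
  have hu₁ : t + (3/4)*r ∈ I := interior_subset (hIoo ⟨by linarith, by linarith⟩)
  have hFfin : ∀ s ∈ Icc t₀ t₁, F s ≠ ⊤ ∧ F s ≠ ⊥ := by
    intro s hs
    have hsI : s ∈ I := hsubI hs
    have h1 : F s < F (t + (3/4)*r) := hFmono hsI hu₁ (by
      rcases hs with ⟨_, h⟩; rw [ht₁def] at h; linarith)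
    have h2 : F (t - (3/4)*r) < F s := hFmono hu₀ hsI (by
      rcases hs with ⟨h, _⟩; rw [ht₀def] at h; linarith)
    exact ⟨h1.ne_top, ne_bot_of_gt h2⟩
  have ht₀m : t₀ ∈ Icc t₀ t₁ := ⟨le_refl _, ht₀₁.le⟩
  have ht₁m : t₁ ∈ Icc t₀ t₁ := ⟨ht₀₁.le, le_refl _⟩
  set r₀ := (F t₀).toReal with hr₀def
  set r₁ := (F t₁).toReal with hr₁def
  have hr₀ : (r₀ : EReal) = F t₀ :=
    EReal.coe_toReal (hFfin t₀ ht₀m).1 (hFfin t₀ ht₀m).2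
  have hr₁ : (r₁ : EReal) = F t₁ :=
    EReal.coe_toReal (hFfin t₁ ht₁m).1 (hFfin t₁ ht₁m).2
  have hr₀₁ : r₀ < r₁ := by
    have := hFmono (hsubI ht₀m) (hsubI ht₁m) ht₀₁
    rw [← hr₀, ← hr₁] at this
    exact_mod_cast this
  set ε := r₁ - r₀ with hεdef
  have hε : 0 < ε := by rw [hεdef]; linarith
  -- inverse of F via IVT
  set G : ℝ → ℝ := fun s =>
    if h : ∃ u ∈ Icc t₀ t₁, F u = (s : EReal) then h.choose else t₀ with hGdef
  have hG : ∀ s : ℝ, r₀ ≤ s → s ≤ r₁ → G s ∈ Icc t₀ t₁ ∧ F (G s) = (s : EReal) := by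
    intro s hs₀ hs₁
    have hmem : (s : EReal) ∈ Icc (F t₀) (F t₁) :=
      ⟨by rw [← hr₀]; exact_mod_cast hs₀, by rw [← hr₁]; exact_mod_cast hs₁⟩
    obtain ⟨u, hu, hFu⟩ := intermediate_value_Icc ht₀₁.le (hFcont.mono hsub) hmem
    have hex : ∃ u ∈ Icc t₀ t₁, F u = (s : EReal) := ⟨u, hu, hFu⟩
    simp only [hGdef, dif_pos hex]
    exact ⟨hex.choose_spec.1, hex.choose_spec.2⟩
  -- the function
  set hval : EuclideanSpace ℝ (Fin N) → ℝ := fun x => r₀ + ε * (min c (L x) / c) with hvaldef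
  set f : EuclideanSpace ℝ (Fin N) → ℝ := fun x => G (hval x) with hfdef
  have hvbound : ∀ x ∈ Ω, r₀ ≤ hval x ∧ hval x ≤ r₁ := by
    intro x hx
    have h1 : 0 < L x := hLpos x hx
    have hmin1 : 0 < min c (L x) := lt_min hc h1
    have hmin2 : min c (L x) ≤ c := min_le_left _ _
    have hq1 : 0 < min c (L x) / c := div_pos hmin1 hc
    have hq2 : min c (L x) / c ≤ 1 := (div_le_one hc).2 hmin2
    constructor
    · simp only [hvaldef]; nlinarith
    · simp only [hvaldef, hεdef]; nlinarith
  have hFf : ∀ x ∈ Ω, f x ∈ Icc t₀ t₁ ∧ F (f x) = (hval x : EReal) := by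
    intro x hx
    obtain ⟨h1, h2⟩ := hvbound x hx
    exact hG (hval x) h1 h2
  clear_value G f
  refine ⟨f, ?_, ?_, ?_⟩
  · intro x hx; exact hsubI (hFf x hx).1
  · intro x hx y hy μ hμ
    have hmid : (1 - μ) • x + μ • y ∈ Ω := hΩconv hx hy (by linarith [hμ.2]) hμ.1 (by ring)
    rw [(hFf x hx).2, (hFf y hy).2, (hFf _ hmid).2]
    rw [← EReal.coe_mul, ← EReal.coe_mul, ← EReal.coe_add, EReal.coe_le_coe_iff]
    -- real concavity inequality
    have hLmid : L ((1 - μ) • x + μ • y) = (1 - μ) * L x + μ * L y := by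
      simp only [hLdef, map_add, map_smul, smul_eq_mul]
      ring
    have hμ0 : (0:ℝ) ≤ μ := hμ.1
    have hμ1 : (0:ℝ) ≤ 1 - μ := by linarith [hμ.2]
    have hkey : (1 - μ) * min c (L x) + μ * min c (L y)
        ≤ min c (L ((1 - μ) • x + μ • y)) := by
      rw [hLmid]
      refine le_min ?_ ?_
      · have h1 : (1 - μ) * min c (L x) ≤ (1 - μ) * c :=
          mul_le_mul_of_nonneg_left (min_le_left _ _) hμ1
        have h2 : μ * min c (L y) ≤ μ * c :=
          mul_le_mul_of_nonneg_left (min_le_left _ _) hμ0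
        linarith
      · have h1 : (1 - μ) * min c (L x) ≤ (1 - μ) * L x :=
          mul_le_mul_of_nonneg_left (min_le_right _ _) hμ1
        have h2 : μ * min c (L y) ≤ μ * L y :=
          mul_le_mul_of_nonneg_left (min_le_right _ _) hμ0
        linarith
    simp only [hvaldef]
    have hεc : (0:ℝ) ≤ ε / c := by positivity
    have hmul := mul_le_mul_of_nonneg_left hkey hεc
    have e1 : (1 - μ) * (r₀ + ε * (min c (L x) / c)) + μ * (r₀ + ε * (min c (L y) / c))
        = r₀ + ε / c * ((1 - μ) * min c (L x) + μ * min c (L y)) := by ring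
    have e2 : r₀ + ε * (min c (L ((1 - μ) • x + μ • y)) / c)
        = r₀ + ε / c * min c (L ((1 - μ) • x + μ • y)) := by ring
    rw [e1, e2]
    exact add_le_add_right hmul r₀
  · refine ⟨x₀, hx₀, x₁, hx₁, ?_⟩
    intro heq
    have h0 : F (f x₀) = (hval x₀ : EReal) := (hFf x₀ hx₀).2
    have h1 : F (f x₁) = (hval x₁ : EReal) := (hFf x₁ hx₁).2
    rw [heq, h1] at h0
    have : hval x₁ = hval x₀ := by
      have := EReal.coe_eq_coe_iff.mp h0
      exact this
    have hv0 : hval x₀ = r₀ + ε := by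
      simp only [hvaldef, ← hcdef, min_self, div_self hc.ne', mul_one]
    have hv1 : hval x₁ < r₀ + ε := by
      have hminlt : min c (L x₁) < c := min_lt_iff.2 (Or.inr hLx₁)
      have hlt : min c (L x₁) / c < 1 := (div_lt_one hc).2 hminlt
      have h2 : ε * (min c (L x₁) / c) < ε := by
        have h3 := mul_lt_mul_of_pos_left hlt hε
        rwa [mul_one] at h3
      simp only [hvaldef]
      exact add_lt_add_right h2 r₀
    rw [this, hv0] at hv1
    exact lt_irrefl _ hv1
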